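/- Let k ≥ 1 and d ≥ 0 be integers. Every element of 𝒫^d(ℤ^k) (polynomials of degree at most d on the group ℤ^k in the finite-difference sense) is the restriction to ℤ^k ⊆ ℝ^k of a real polynomial function in k variables of total degree at most d, and this polynomial is unique. Consequently, restriction to ℤ^k defines a linear isomorphism from the space of real polynomial functions on ℝ^k of total degree at most d onto 𝒫^d(ℤ^k). -/

import Mathlib

/-- The (additive) partial derivative `∂_g f (h) = f (g + h) - f h` for
functions on the group `ℤ^k`. -/
def pd (k : ℕ) (g : Fin k → ℤ) (f : (Fin k → ℤ) → ℝ) : (Fin k → ℤ) → ℝ :=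
  fun h => f (g + h) - f h

/-- Iterated partial derivatives along a list of group elements. -/
def iterDeriv (k : ℕ) : List (Fin k → ℤ) → ((Fin k → ℤ) → ℝ) → ((Fin k → ℤ) → ℝ)
  | [], f => f
  | g :: l, f => pd k g (iterDeriv k l f)

/-- `f ∈ 𝒫^d(ℤ^k)`: all iterated partial derivatives of order `d + 1`
vanish. -/
def IsPolyDeg (k d : ℕ) (f : (Fin k → ℤ) → ℝ) : Prop :=
  ∀ l : List (Fin k → ℤ), l.length = d + 1 → iterDeriv k l f = 0

open MvPolynomial Finset

/-! ### Basic lemmas on iterated differences -/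

lemma iterDeriv_append (k : ℕ) (l₁ l₂ : List (Fin k → ℤ)) (f : (Fin k → ℤ) → ℝ) :
    iterDeriv k (l₁ ++ l₂) f = iterDeriv k l₁ (iterDeriv k l₂ f) := by
  induction l₁ with
  | nil => rfl
  | cons g l ih => simp [iterDeriv, ih]

lemma pd_zero_fun (k : ℕ) (g : Fin k → ℤ) : pd k g 0 = 0 := by
  funext h; simp [pd]

lemma iterDeriv_zero_fun (k : ℕ) (l : List (Fin k → ℤ)) : iterDeriv k l 0 = 0 := by
  induction l with
  | nil => rfl
  | cons g l ih => simp [iterDeriv, ih, pd_zero_fun]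

lemma isPolyDeg_long {k d : ℕ} {f : (Fin k → ℤ) → ℝ} (hf : IsPolyDeg k d f)
    (l : List (Fin k → ℤ)) (hl : d + 1 ≤ l.length) : iterDeriv k l f = 0 := by
  have hsplit : l = l.take (l.length - (d + 1)) ++ l.drop (l.length - (d + 1)) :=
    (List.take_append_drop _ l).symm
  rw [hsplit, iterDeriv_append, hf (l.drop (l.length - (d + 1))) (by simp; omega),
    iterDeriv_zero_fun]

/-! ### One-variable Newton expansion -/

/-- One-variable forward difference. -/
def fd (φ : ℤ → ℝ) : ℤ → ℝ := fun t => φ (t + 1) - φ t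

/-- Iterated one-variable forward difference. -/
def fdIter : ℕ → (ℤ → ℝ) → (ℤ → ℝ)
  | 0, φ => φ
  | n + 1, φ => fdIter n (fd φ)

/-- Generalized binomial coefficient as a real number. -/
noncomputable def zchoose (t : ℤ) (n : ℕ) : ℝ :=
  (∏ j ∈ Finset.range n, ((t : ℝ) - (j : ℝ))) / (n.factorial : ℝ)

lemma zchoose_zero (t : ℤ) : zchoose t 0 = 1 := by simp [zchoose]

lemma zchoose_zero_left (n : ℕ) : zchoose 0 (n + 1) = 0 := by
  unfold zchoose
  rw [Finset.prod_eq_zero (Finset.mem_range.mpr (Nat.succ_pos n)) (by norm_num)]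
  simp

lemma zchoose_pascal (t : ℤ) (n : ℕ) :
    zchoose (t + 1) (n + 1) - zchoose t (n + 1) = zchoose t n := by
  unfold zchoose
  have h1 : ∏ j ∈ Finset.range (n + 1), (((t + 1 : ℤ) : ℝ) - (j : ℝ))
      = (∏ j ∈ Finset.range n, ((t : ℝ) - (j : ℝ))) * ((t : ℝ) + 1) := by
    rw [Finset.prod_range_succ']
    congr 1
    · apply Finset.prod_congr rfl
      intro j _
      push_cast
      ring
    · push_cast; ring
  have h2 : ∏ j ∈ Finset.range (n + 1), ((t : ℝ) - (j : ℝ))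
      = (∏ j ∈ Finset.range n, ((t : ℝ) - (j : ℝ))) * ((t : ℝ) - (n : ℝ)) :=
    Finset.prod_range_succ _ _
  rw [h1, h2, Nat.factorial_succ]
  have hfac : (n.factorial : ℝ) ≠ 0 := Nat.cast_ne_zero.mpr (Nat.factorial_ne_zero n)
  have hsucc : ((n + 1 : ℕ) : ℝ) ≠ 0 := Nat.cast_ne_zero.mpr (Nat.succ_ne_zero n)
  field_simp
  push_cast
  ring

lemma fd_const {φ : ℤ → ℝ} (h : ∀ t, fd φ t = 0) : ∀ t, φ t = φ 0 := by
  intro t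
  induction t using Int.induction_on with
  | zero => rfl
  | succ n ih =>
    have := h n
    simp only [fd, sub_eq_zero] at this
    push_cast
    rw [this, ih]
  | pred n ih =>
    have := h (-(n : ℤ) - 1)
    simp only [fd, sub_eq_zero] at this
    have h2 : (-(n : ℤ) - 1) + 1 = -(n : ℤ) := by ring
    rw [h2] at this
    have h3 : φ (-(n : ℤ) - 1) = φ (-(n : ℤ)) := this.symm
    rw [h3, ih]

lemma newton1 : ∀ (d : ℕ) (φ : ℤ → ℝ), (∀ t, fdIter (d + 1) φ t = 0) →
    ∀ t, φ t = ∑ n ∈ Finset.range (d + 1), zchoose t n * fdIter n φ 0 := by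
  intro d
  induction d with
  | zero =>
    intro φ h t
    simp [zchoose_zero, fdIter]
    exact fd_const h t
  | succ d ih =>
    intro φ h t
    have hfd : ∀ s, fd φ s = ∑ n ∈ Finset.range (d + 1), zchoose s n * fdIter (n + 1) φ 0 :=
      ih (fd φ) h
    set g : ℤ → ℝ := fun s => ∑ n ∈ Finset.range (d + 2), zchoose s n * fdIter n φ 0 with hg
    have hfdg : ∀ s, fd g s = fd φ s := by
      intro s
      have : fd g s = ∑ n ∈ Finset.range (d + 2),
          (zchoose (s + 1) n - zchoose s n) * fdIter n φ 0 := by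
        simp only [fd, hg, ← Finset.sum_sub_distrib, sub_mul]
      rw [this, Finset.sum_range_succ']
      simp only [zchoose_zero, sub_self, zero_mul, add_zero]
      rw [hfd s]
      apply Finset.sum_congr rfl
      intro n _
      rw [zchoose_pascal]
    have hconst : ∀ s, φ s - g s = φ 0 - g 0 := by
      have : ∀ s, fd (fun u => φ u - g u) s = 0 := by
        intro s
        simp only [fd]
        have := hfdg s
        simp only [fd] at this
        linarith
      exact fd_const this
    have hg0 : g 0 = φ 0 := by
      show (∑ n ∈ Finset.range (d + 2), zchoose 0 n * fdIter n φ 0) = φ 0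
      rw [Finset.sum_range_succ']
      simp only [zchoose_zero_left, zero_mul, Finset.sum_const_zero, zero_add,
        zchoose_zero, one_mul]
      rfl
    have := hconst t
    rw [hg0] at this
    have h0 : φ t = g t := by linarith
    rw [h0]

/-! ### Injectivity of evaluation on integer points -/

lemma poly1_int_zero (p : Polynomial ℝ) (h : ∀ t : ℤ, p.eval (t : ℝ) = 0) : p = 0 := by
  apply Polynomial.eq_zero_of_infinite_isRoot
  apply Set.infinite_of_injective_forall_mem (f := fun t : ℤ => (t : ℝ))
  exact Int.cast_injective
  intro t
  exact h t

lemma evalZ_inj : ∀ (k : ℕ) (P : MvPolynomial (Fin k) ℝ),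
    (∀ x : Fin k → ℤ, eval (fun i => (x i : ℝ)) P = 0) → P = 0 := by
  intro k
  induction k with
  | zero =>
    intro P h
    obtain ⟨c, rfl⟩ := C_surjective (Fin 0) P
    have := h (fun _ => 0)
    rw [eval_C] at this
    rw [this, map_zero]
  | succ k ih =>
    intro P h
    have hcoeff : ∀ n, (finSuccEquiv ℝ k P).coeff n = 0 := by
      intro n
      apply ih
      intro y
      have hmap : Polynomial.map (eval fun i => (y i : ℝ)) (finSuccEquiv ℝ k P) = 0 := by
        apply poly1_int_zero
        intro t
        have key := eval_eq_eval_mv_eval' (fun i => (y i : ℝ)) (t : ℝ) P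
        rw [← key]
        have hx := h (Fin.cons t y)
        have hcast : (fun i => ((Fin.cons t y : Fin (k + 1) → ℤ) i : ℝ))
            = Fin.cons (t : ℝ) (fun i => (y i : ℝ)) := by
          funext i
          refine Fin.cases ?_ (fun j => ?_) i <;> simp
        rw [hcast] at hx
        exact hx
      have := congrArg (fun p => Polynomial.coeff p n) hmap
      simpa [Polynomial.coeff_map] using this
    have hQ0 : finSuccEquiv ℝ k P = 0 := Polynomial.ext fun n => by rw [hcoeff n]; simp
    apply (finSuccEquiv ℝ k).injective (a₁ := P) (a₂ := 0)
    rw [map_zero, hQ0]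

/-! ### Shift of polynomials and degree drop -/

/-- Substituting `X i + C (g i)` for `X i`. -/
noncomputable def shiftP (k : ℕ) (g : Fin k → ℤ) :
    MvPolynomial (Fin k) ℝ →ₐ[ℝ] MvPolynomial (Fin k) ℝ :=
  aeval (fun i => X i + C ((g i : ℤ) : ℝ))

lemma eval_shiftP {k : ℕ} (g : Fin k → ℤ) (P : MvPolynomial (Fin k) ℝ) (x : Fin k → ℤ) :
    eval (fun i => (x i : ℝ)) (shiftP k g P) = eval (fun i => ((g + x) i : ℝ)) P := by
  rw [shiftP, aeval_def, algebraMap_eq, eval_eval₂]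
  have h1 : ((eval fun i => (x i : ℝ)).comp (C : ℝ →+* MvPolynomial (Fin k) ℝ))
      = RingHom.id ℝ := by
    ext r
    simp
  rw [h1, eval₂_id]
  have h2 : (fun s : Fin k => eval (fun i => ((x i : ℤ) : ℝ)) (X s + C ((g s : ℤ) : ℝ)))
      = fun i => (((g + x) i : ℤ) : ℝ) := by
    funext i
    simp [Pi.add_apply]
    push_cast
    ring
  rw [h2]

lemma pd_shiftP {k : ℕ} (g : Fin k → ℤ) (P : MvPolynomial (Fin k) ℝ) :
    pd k g (fun x => eval (fun i => (x i : ℝ)) P)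
      = fun x => eval (fun i => (x i : ℝ)) (shiftP k g P - P) := by
  funext x
  simp only [pd, map_sub, eval_shiftP]

/-- Iterated polynomial difference. -/
noncomputable def sdiffP (k : ℕ) : List (Fin k → ℤ) → MvPolynomial (Fin k) ℝ →
    MvPolynomial (Fin k) ℝ
  | [], P => P
  | g :: l, P => shiftP k g (sdiffP k l P) - sdiffP k l P

lemma iterDeriv_eval {k : ℕ} (l : List (Fin k → ℤ)) (P : MvPolynomial (Fin k) ℝ) :
    iterDeriv k l (fun x => eval (fun i => (x i : ℝ)) P)
      = fun x => eval (fun i => (x i : ℝ)) (sdiffP k l P) := by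
  induction l with
  | nil => rfl
  | cons g l ih =>
    show pd k g _ = _
    rw [ih, pd_shiftP]
    rfl

lemma totalDegree_shift_monomial {k : ℕ} (g : Fin k → ℤ) (m' : Fin k →₀ ℕ) (c : ℝ) :
    (shiftP k g (monomial m' c)).totalDegree ≤ m'.sum fun _ e => e := by
  rw [shiftP, aeval_monomial]
  calc (algebraMap ℝ (MvPolynomial (Fin k) ℝ) c *
          m'.prod fun i e => (X i + C ((g i : ℤ) : ℝ)) ^ e).totalDegree
      ≤ (algebraMap ℝ (MvPolynomial (Fin k) ℝ) c).totalDegree +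
          (m'.prod fun i e => (X i + C ((g i : ℤ) : ℝ)) ^ e).totalDegree :=
        totalDegree_mul _ _
    _ ≤ 0 + (m'.prod fun i e => (X i + C ((g i : ℤ) : ℝ)) ^ e).totalDegree := by
        rw [algebraMap_eq, totalDegree_C]
    _ ≤ m'.sum fun _ e => e := by
        rw [zero_add, Finsupp.prod]
        calc (∏ i ∈ m'.support, (X i + C ((g i : ℤ) : ℝ)) ^ m' i).totalDegree
            ≤ ∑ i ∈ m'.support, ((X i + C ((g i : ℤ) : ℝ)) ^ m' i).totalDegree :=
              totalDegree_finset_prod _ _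
          _ ≤ ∑ i ∈ m'.support, m' i := by
              apply Finset.sum_le_sum
              intro i _
              calc ((X i + C ((g i : ℤ) : ℝ)) ^ m' i).totalDegree
                  ≤ m' i * (X i + C ((g i : ℤ) : ℝ)).totalDegree := totalDegree_pow _ _
                _ ≤ m' i * 1 := by
                    apply Nat.mul_le_mul_left
                    calc (X i + C ((g i : ℤ) : ℝ)).totalDegree
                        ≤ max (X i : MvPolynomial (Fin k) ℝ).totalDegree
                            (C ((g i : ℤ) : ℝ) : MvPolynomial (Fin k) ℝ).totalDegree :=
                          totalDegree_add _ _
                      _ ≤ 1 := by rw [totalDegree_X, totalDegree_C]; simp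
                _ = m' i := Nat.mul_one _
          _ = m'.sum fun _ e => e := rfl

lemma totalDegree_shift {k : ℕ} (g : Fin k → ℤ) (P : MvPolynomial (Fin k) ℝ) :
    (shiftP k g P).totalDegree ≤ P.totalDegree := by
  conv_lhs => rw [as_sum P]
  rw [map_sum]
  apply totalDegree_finsetSum_le
  intro m hm
  exact (totalDegree_shift_monomial g m _).trans (le_totalDegree hm)

lemma coeff_shift_monomial {k : ℕ} (g : Fin k → ℤ) :
    ∀ (N : ℕ) (m' : Fin k →₀ ℕ) (c : ℝ) (m : Fin k →₀ ℕ),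
    (m'.sum fun _ e => e) = N → (m'.sum fun _ e => e) ≤ (m.sum fun _ e => e) →
    coeff m (shiftP k g (monomial m' c)) = coeff m (monomial m' c) := by
  intro N
  induction N with
  | zero =>
    intro m' c m hN _
    have hm' : m' = 0 := by
      by_contra hne
      obtain ⟨i, hi⟩ := Finsupp.ne_iff.mp hne
      have hmem : i ∈ m'.support := Finsupp.mem_support_iff.mpr (by simpa using hi)
      have : m' i = 0 := by
        have := Finset.sum_eq_zero_iff.mp hN i hmem
        exact this
      exact (Finsupp.mem_support_iff.mp hmem) this
    subst hm'
    rw [show (monomial (0 : Fin k →₀ ℕ) c) = C c from C_apply.symm]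
    rw [show shiftP k g (C c) = C c by rw [shiftP, aeval_C, algebraMap_eq]]
  | succ N ih =>
    intro m' c m hN hle
    have hex : ∃ i, m' i ≠ 0 := by
      by_contra hno
      push_neg at hno
      have : m' = 0 := Finsupp.ext fun i => hno i
      rw [this] at hN
      simp [Finsupp.sum_zero_index] at hN
    obtain ⟨i, hi⟩ := hex
    set m'' := m' - Finsupp.single i 1 with hm''
    have hadd : m'' + Finsupp.single i 1 = m' := by
      ext j
      simp only [Finsupp.add_apply, hm'', Finsupp.tsub_apply, Finsupp.single_apply]
      by_cases hij : i = j
      · subst hij; simp; omega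
      · simp [hij]
    have hsum'' : (m''.sum fun _ e => e) = N := by
      have := congrArg (fun z => z.sum fun (_ : Fin k) (e : ℕ) => e) hadd
      rw [Finsupp.sum_add_index' (fun _ => rfl) (fun _ _ _ => rfl)] at this
      rw [Finsupp.sum_single_index rfl] at this
      omega
    rw [← hadd, monomial_add_single, pow_one]
    rw [map_mul]
    have hX : shiftP k g (X i) = X i + C ((g i : ℤ) : ℝ) := by
      rw [shiftP, aeval_X]
    rw [hX, mul_add, coeff_add]
    have hC0 : coeff m (shiftP k g (monomial m'' c) * C ((g i : ℤ) : ℝ)) = 0 := by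
      rw [mul_comm, coeff_C_mul]
      have hz : coeff m (shiftP k g (monomial m'' c)) = 0 := by
        apply coeff_eq_zero_of_totalDegree_lt
        calc (shiftP k g (monomial m'' c)).totalDegree
            ≤ m''.sum fun _ e => e := totalDegree_shift_monomial g m'' c
          _ = N := hsum''
          _ < ∑ j ∈ m.support, m j := by
              have : (m.sum fun _ e => e) = ∑ j ∈ m.support, m j := rfl
              omega
      rw [hz, mul_zero]
    rw [hC0, add_zero]
    classical
    rw [coeff_mul_X', coeff_mul_X']
    by_cases hmem : i ∈ m.support
    · simp only [hmem, if_true]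
      have hmi : m i ≠ 0 := Finsupp.mem_support_iff.mp hmem
      have haddm : (m - Finsupp.single i 1) + Finsupp.single i 1 = m := by
        ext j
        simp only [Finsupp.add_apply, Finsupp.tsub_apply, Finsupp.single_apply]
        by_cases hij : i = j
        · subst hij; simp; omega
        · simp [hij]
      have hmsub : ((m - Finsupp.single i 1).sum fun _ e => e) = (m.sum fun _ e => e) - 1 := by
        have := congrArg (fun z => z.sum fun (_ : Fin k) (e : ℕ) => e) haddm
        rw [Finsupp.sum_add_index' (fun _ => rfl) (fun _ _ _ => rfl)] at this
        rw [Finsupp.sum_single_index rfl] at this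
        omega
      apply ih m'' c (m - Finsupp.single i 1) hsum''
      rw [hmsub, hsum'']
      omega
    · simp [hmem]

lemma coeff_shift {k : ℕ} (g : Fin k → ℤ) (P : MvPolynomial (Fin k) ℝ) (m : Fin k →₀ ℕ)
    (h : P.totalDegree ≤ m.sum fun _ e => e) :
    coeff m (shiftP k g P) = coeff m P := by
  conv_lhs => rw [as_sum P]
  conv_rhs => rw [as_sum P]
  rw [map_sum, coeff_sum, coeff_sum]
  apply Finset.sum_congr rfl
  intro m' hm'
  exact coeff_shift_monomial g (m'.sum fun _ e => e) m' _ m rfl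
    ((le_totalDegree hm').trans h)

lemma totalDegree_le_of_coeff {k : ℕ} (Q : MvPolynomial (Fin k) ℝ) (n : ℕ)
    (h : ∀ m : Fin k →₀ ℕ, n < (m.sum fun _ e => e) → coeff m Q = 0) :
    Q.totalDegree ≤ n := by
  apply Finset.sup_le
  intro m hm
  by_contra hlt
  exact (mem_support_iff.mp hm) (h m (lt_of_not_ge hlt))

lemma degree_drop {k : ℕ} (g : Fin k → ℤ) (P : MvPolynomial (Fin k) ℝ) (n : ℕ)
    (h : P.totalDegree ≤ n + 1) :
    (shiftP k g P - P).totalDegree ≤ n := by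
  apply totalDegree_le_of_coeff
  intro m hm
  rw [coeff_sub, coeff_shift g P m (h.trans hm), sub_self]

lemma shift_of_deg_zero {k : ℕ} (g : Fin k → ℤ) (Q : MvPolynomial (Fin k) ℝ)
    (h : Q.totalDegree = 0) : shiftP k g Q = Q := by
  conv_lhs => rw [as_sum Q]
  conv_rhs => rw [as_sum Q]
  rw [map_sum]
  apply Finset.sum_congr rfl
  intro m hm
  have hm0 : m = 0 := Finsupp.ext fun x => (totalDegree_eq_zero_iff (Fin k) Q).mp h m hm x
  subst hm0
  rw [show (monomial (0 : Fin k →₀ ℕ) (coeff 0 Q)) = C (coeff 0 Q) from C_apply.symm]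
  rw [shiftP, aeval_C, algebraMap_eq]

lemma sdiff_deg {k : ℕ} : ∀ (l : List (Fin k → ℤ)) (P : MvPolynomial (Fin k) ℝ) (n : ℕ),
    P.totalDegree ≤ n → (sdiffP k l P).totalDegree ≤ n - l.length := by
  intro l
  induction l with
  | nil => intro P n h; simpa [sdiffP] using h
  | cons g l ih =>
    intro P n h
    have hQ : (sdiffP k l P).totalDegree ≤ n - l.length := ih P n h
    show (shiftP k g (sdiffP k l P) - sdiffP k l P).totalDegree ≤ n - (l.length + 1)
    rcases Nat.eq_zero_or_pos (n - l.length) with h0 | hpos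
    · rw [shift_of_deg_zero g _ (Nat.le_zero.mp (h0 ▸ hQ)), sub_self]
      simp
    · have : (shiftP k g (sdiffP k l P) - sdiffP k l P).totalDegree ≤ n - l.length - 1 := by
        apply degree_drop
        omega
      omega

lemma isPolyDeg_of_deg_le {k d : ℕ} (P : MvPolynomial (Fin k) ℝ) (h : P.totalDegree ≤ d) :
    IsPolyDeg k d (fun x => eval (fun i => (x i : ℝ)) P) := by
  intro l hl
  rw [iterDeriv_eval]
  cases l with
  | nil => simp at hl
  | cons g l' =>
    have hlen : l'.length = d := by simpa using hl
    have hQ : (sdiffP k l' P).totalDegree = 0 := by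
      have := sdiff_deg l' P d h
      rw [hlen] at this
      omega
    have hcons : sdiffP k (g :: l') P = shiftP k g (sdiffP k l' P) - sdiffP k l' P := rfl
    rw [hcons, shift_of_deg_zero g _ hQ, sub_self]
    funext x
    simp

/-! ### Existence: Newton interpolation -/

lemma cons_add {k : ℕ} (t s : ℤ) (y w : Fin k → ℤ) :
    (Fin.cons t y : Fin (k + 1) → ℤ) + Fin.cons s w = Fin.cons (t + s) (y + w) := by
  funext i
  refine Fin.cases ?_ (fun j => ?_) i <;> simp

lemma phi_fd {k : ℕ} : ∀ (n : ℕ) (f : (Fin (k + 1) → ℤ) → ℝ) (y : Fin k → ℤ) (t : ℤ),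
    fdIter n (fun t => f (Fin.cons t y)) t
      = iterDeriv (k + 1) (List.replicate n (Fin.cons 1 0)) f (Fin.cons t y) := by
  intro n
  induction n with
  | zero => intro f y t; rfl
  | succ n ih =>
    intro f y t
    have hfd : fd (fun t => f (Fin.cons t y))
        = fun t => (pd (k + 1) (Fin.cons 1 0) f) (Fin.cons t y) := by
      funext s
      simp only [fd, pd]
      rw [cons_add]
      simp [add_comm]
    show fdIter n (fd fun t => f (Fin.cons t y)) t = _
    rw [hfd, ih (pd (k + 1) (Fin.cons 1 0) f) y t]
    rw [List.replicate_succ', iterDeriv_append]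
    rfl

lemma cons0_pd {k : ℕ} (G : (Fin (k + 1) → ℤ) → ℝ) (w : Fin k → ℤ) :
    pd k w (fun y => G (Fin.cons 0 y))
      = fun y => pd (k + 1) (Fin.cons 0 w) G (Fin.cons 0 y) := by
  funext y
  simp only [pd]
  rw [cons_add]
  simp

lemma cons0_iter {k : ℕ} : ∀ (l : List (Fin k → ℤ)) (G : (Fin (k + 1) → ℤ) → ℝ),
    iterDeriv k l (fun y => G (Fin.cons 0 y))
      = fun y => iterDeriv (k + 1) (l.map (Fin.cons 0)) G (Fin.cons 0 y) := by
  intro l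
  induction l with
  | nil => intro G; rfl
  | cons g l ih =>
    intro G
    show pd k g (iterDeriv k l fun y => G (Fin.cons 0 y)) = _
    rw [ih G, cons0_pd]
    rfl

lemma exists_poly : ∀ (k d : ℕ) (f : (Fin k → ℤ) → ℝ), IsPolyDeg k d f →
    ∃ P : MvPolynomial (Fin k) ℝ, P.totalDegree ≤ d ∧
      ∀ x : Fin k → ℤ, f x = eval (fun i => (x i : ℝ)) P := by
  intro k
  induction k with
  | zero =>
    intro d f _
    refine ⟨C (f default), by simp, fun x => ?_⟩
    rw [Subsingleton.elim x default, eval_C]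
  | succ k ih =>
    intro d f hf
    set g : ℕ → (Fin k → ℤ) → ℝ :=
      fun n y => iterDeriv (k + 1) (List.replicate n (Fin.cons 1 0)) f (Fin.cons 0 y) with hgdef
    have hnewton : ∀ x : Fin (k + 1) → ℤ,
        f x = ∑ n ∈ Finset.range (d + 1), zchoose (x 0) n * g n (Fin.tail x) := by
      intro x
      have h1 : ∀ t, fdIter (d + 1) (fun t => f (Fin.cons t (Fin.tail x))) t = 0 := by
        intro t
        rw [phi_fd]
        rw [hf (List.replicate (d + 1) (Fin.cons 1 0)) (by simp)]
        rfl
      have key := newton1 d _ h1 (x 0)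
      have hx : f x = f (Fin.cons (x 0) (Fin.tail x)) := by rw [Fin.cons_self_tail]
      rw [hx, key]
      apply Finset.sum_congr rfl
      intro n _
      congr 1
      rw [phi_fd]
    have hg : ∀ n : ℕ, ∃ Q : MvPolynomial (Fin k) ℝ, Q.totalDegree ≤ d - n ∧
        ∀ y : Fin k → ℤ, g n y = eval (fun i => (y i : ℝ)) Q := by
      intro n
      by_cases hn : n ≤ d
      · apply ih (d - n)
        intro l hl
        have hform : iterDeriv k l (g n) = fun y =>
            iterDeriv (k + 1) (l.map (Fin.cons 0) ++ List.replicate n (Fin.cons 1 0)) f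
              (Fin.cons 0 y) := by
          rw [iterDeriv_append]
          exact cons0_iter l _
        rw [hform, hf _ (by simp [hl]; omega)]
        rfl
      · have hzero : iterDeriv (k + 1) (List.replicate n (Fin.cons 1 0)) f = 0 :=
          isPolyDeg_long hf _ (by simp; omega)
        refine ⟨0, by simp, fun y => ?_⟩
        rw [hgdef]
        simp [hzero]
    choose Q hQd hQe using hg
    refine ⟨∑ n ∈ Finset.range (d + 1), rename Fin.succ (Q n) *
      (C ((n.factorial : ℝ)⁻¹) * ∏ j ∈ Finset.range n, (X (0 : Fin (k + 1)) - C (j : ℝ))), ?_, ?_⟩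
    · apply totalDegree_finsetSum_le
      intro n hn
      have hn' : n ≤ d := by
        rw [Finset.mem_range] at hn
        omega
      calc (rename Fin.succ (Q n) *
            (C ((n.factorial : ℝ)⁻¹) * ∏ j ∈ Finset.range n, (X (0 : Fin (k + 1)) - C (j : ℝ)))).totalDegree
          ≤ (rename Fin.succ (Q n)).totalDegree +
            (C ((n.factorial : ℝ)⁻¹) * ∏ j ∈ Finset.range n, (X (0 : Fin (k + 1)) - C (j : ℝ))).totalDegree :=
            totalDegree_mul _ _
        _ ≤ (d - n) + n := by
            apply Nat.add_le_add
            · exact (totalDegree_rename_le _ _).trans (hQd n)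
            · calc (C ((n.factorial : ℝ)⁻¹) *
                    ∏ j ∈ Finset.range n, (X (0 : Fin (k + 1)) - C (j : ℝ))).totalDegree
                  ≤ (C ((n.factorial : ℝ)⁻¹) : MvPolynomial (Fin (k + 1)) ℝ).totalDegree +
                    (∏ j ∈ Finset.range n, (X (0 : Fin (k + 1)) - C (j : ℝ))).totalDegree :=
                    totalDegree_mul _ _
                _ ≤ 0 + ∑ j ∈ Finset.range n,
                      ((X (0 : Fin (k + 1)) - C (j : ℝ)) : MvPolynomial (Fin (k + 1)) ℝ).totalDegree := by
                    rw [totalDegree_C]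
                    exact Nat.add_le_add le_rfl (totalDegree_finset_prod _ _)
                _ ≤ ∑ j ∈ Finset.range n, 1 := by
                    rw [zero_add]
                    apply Finset.sum_le_sum
                    intro j _
                    calc ((X (0 : Fin (k + 1)) - C (j : ℝ)) : MvPolynomial (Fin (k + 1)) ℝ).totalDegree
                        ≤ max (X (0 : Fin (k + 1)) : MvPolynomial (Fin (k + 1)) ℝ).totalDegree
                            (C (j : ℝ) : MvPolynomial (Fin (k + 1)) ℝ).totalDegree :=
                          totalDegree_sub _ _
                      _ ≤ 1 := by rw [totalDegree_X, totalDegree_C]; simp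
                _ = n := by simp
        _ ≤ d := by omega
    · intro x
      rw [hnewton x, map_sum]
      apply Finset.sum_congr rfl
      intro n _
      rw [map_mul, map_mul, eval_rename, eval_C, map_prod]
      have h1 : ((fun i => ((x i : ℤ) : ℝ)) ∘ (Fin.succ : Fin k → Fin (k + 1)))
          = fun i => ((Fin.tail x i : ℤ) : ℝ) := rfl
      rw [h1, ← hQe n (Fin.tail x)]
      have h2 : ∀ j ∈ Finset.range n,
          eval (fun i => ((x i : ℤ) : ℝ)) (X (0 : Fin (k + 1)) - C (j : ℝ))
            = ((x 0 : ℝ) - (j : ℝ)) := by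
        intro j _
        rw [map_sub, eval_X, eval_C]
      rw [Finset.prod_congr rfl h2, zchoose, div_eq_mul_inv]
      ring

theorem stmt14 (k d : ℕ) (hk : 1 ≤ k) :
    (∀ f : (Fin k → ℤ) → ℝ, IsPolyDeg k d f →
        ∃! P : MvPolynomial (Fin k) ℝ, P.totalDegree ≤ d ∧
          ∀ x : Fin k → ℤ, f x = MvPolynomial.eval (fun i => (x i : ℝ)) P) ∧
      ∃ L : MvPolynomial.restrictTotalDegree (Fin k) ℝ d →ₗ[ℝ] ((Fin k → ℤ) → ℝ),
        (∀ (P : MvPolynomial.restrictTotalDegree (Fin k) ℝ d) (x : Fin k → ℤ),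
            L P x = MvPolynomial.eval (fun i => (x i : ℝ)) (P : MvPolynomial (Fin k) ℝ)) ∧
          Function.Injective L ∧
          Set.range L = {f : (Fin k → ℤ) → ℝ | IsPolyDeg k d f} := by
  constructor
  · intro f hf
    obtain ⟨P, hPd, hPe⟩ := exists_poly k d f hf
    refine ⟨P, ⟨hPd, hPe⟩, ?_⟩
    rintro P' ⟨hP'd, hP'e⟩
    have : ∀ x : Fin k → ℤ, eval (fun i => (x i : ℝ)) (P' - P) = 0 := by
      intro x
      rw [map_sub, ← hPe x, ← hP'e x, sub_self]
    have := evalZ_inj k (P' - P) this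
    exact sub_eq_zero.mp this
  · refine ⟨{ toFun := fun P x => eval (fun i => (x i : ℝ)) (P : MvPolynomial (Fin k) ℝ)
              map_add' := fun P Q => funext fun x => by
                simp only [Submodule.coe_add, map_add]; rfl
              map_smul' := fun c P => funext fun x => by
                simp only [SetLike.val_smul, smul_eval, RingHom.id_apply]; rfl }, ?_, ?_, ?_⟩
    · intro P x
      rfl
    · intro P1 P2 hP
      have hfun : ∀ x : Fin k → ℤ,
          eval (fun i => (x i : ℝ)) ((P1 : MvPolynomial (Fin k) ℝ) - (P2 : MvPolynomial (Fin k) ℝ)) = 0 := by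
        intro x
        rw [map_sub]
        have := congrFun hP x
        simp only [LinearMap.coe_mk, AddHom.coe_mk] at this
        rw [this, sub_self]
      have := evalZ_inj k _ hfun
      exact Subtype.ext (sub_eq_zero.mp this)
    · ext f
      constructor
      · rintro ⟨P, rfl⟩
        exact isPolyDeg_of_deg_le (P : MvPolynomial (Fin k) ℝ)
          ((mem_restrictTotalDegree (Fin k) d (P : MvPolynomial (Fin k) ℝ)).mp P.2)
      · intro hf
        obtain ⟨P, hPd, hPe⟩ := exists_poly k d f hf
        exact ⟨⟨P, (mem_restrictTotalDegree (Fin k) d P).mpr hPd⟩,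
          funext fun x => (hPe x).symm⟩
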